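/- There is an absolute constant C with the following property. Let α ∈ (0,π) with α ≠ π/2, set ε_α := min(α, |α − π/2|, π − α), let p ∈ [2,∞) be admissible for α, q := p/(p−1), and for ξ ∈ ℝ set Ξ := 2/q + iξ. Then for all ξ ∈ ℝ and all θ, y ∈ (0,α): |Ξ|·|K(ξ,θ,y)| ≤ C·ε_α^{−1} and |ξ|·|∂_ξ K(ξ,θ,y)| ≤ C·ε_α^{−1}, where ∂_ξ denotes the partial derivative in the real variable ξ. -/

import Mathlib

set_option maxHeartbeats 1000000


noncomputable section

/-- `p ∈ [2,∞)` is admissible for the aperture `α`: `p ≥ 4` when `α < π/2`, and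
`p ≥ 2 p_α = 2·2α/(2α−π)` when `α > π/2`. -/
def Admissible (α p : ℝ) : Prop :=
  (α < Real.pi / 2 ∧ 4 ≤ p) ∨ (Real.pi / 2 < α ∧ 2 * (2 * α / (2 * α - Real.pi)) ≤ p)

/-- `Ξ = 2/q + iξ`. -/
def Xi (q ξ : ℝ) : ℂ := ((2 / q : ℝ) : ℂ) + (ξ : ℂ) * Complex.I

/-- The Green kernel, at frequency `ξ`, of `(∂_t + 2/q)² U + ∂_θ² U = h` on
`ℝ × (0,α)` with Dirichlet boundary conditions. -/
def Kker (q α ξ θ y : ℝ) : ℂ :=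
  if θ ≤ y then
    Complex.sin (Xi q ξ * (θ : ℂ)) * Complex.sin (Xi q ξ * ((y : ℂ) - (α : ℂ))) /
      (Xi q ξ * Complex.sin (Xi q ξ * (α : ℂ)))
  else
    Complex.sin (Xi q ξ * ((θ : ℂ) - (α : ℂ))) * Complex.sin (Xi q ξ * (y : ℂ)) /
      (Xi q ξ * Complex.sin (Xi q ξ * (α : ℂ)))

section Helpers

lemma sqAbsSin (a b : ℝ) :
    ‖Complex.sin ((a:ℂ) + (b:ℂ) * Complex.I)‖ ^ 2
      = Real.sin a ^ 2 + Real.sinh b ^ 2 := by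
  rw [Complex.sin_add_mul_I]
  have h1 : Complex.sin (a:ℂ) = ((Real.sin a : ℝ) : ℂ) := (Complex.ofReal_sin a).symm
  have h2 : Complex.cos (a:ℂ) = ((Real.cos a : ℝ) : ℂ) := (Complex.ofReal_cos a).symm
  have h3 : Complex.cosh (b:ℂ) = ((Real.cosh b : ℝ) : ℂ) := (Complex.ofReal_cosh b).symm
  have h4 : Complex.sinh (b:ℂ) = ((Real.sinh b : ℝ) : ℂ) := (Complex.ofReal_sinh b).symm
  rw [h1, h2, h3, h4, ← Complex.ofReal_mul, ← Complex.ofReal_mul, Complex.sq_norm,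
    Complex.normSq_apply]
  simp only [Complex.add_re, Complex.ofReal_re, Complex.mul_re, Complex.I_re, Complex.I_im,
    Complex.ofReal_im, Complex.add_im, Complex.mul_im]
  ring_nf
  nlinarith [Real.sin_sq_add_cos_sq a, Real.cosh_sq b]

lemma sqAbsCos (a b : ℝ) :
    ‖Complex.cos ((a:ℂ) + (b:ℂ) * Complex.I)‖ ^ 2
      = Real.cos a ^ 2 + Real.sinh b ^ 2 := by
  rw [Complex.cos_add_mul_I]
  have h1 : Complex.sin (a:ℂ) = ((Real.sin a : ℝ) : ℂ) := (Complex.ofReal_sin a).symm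
  have h2 : Complex.cos (a:ℂ) = ((Real.cos a : ℝ) : ℂ) := (Complex.ofReal_cos a).symm
  have h3 : Complex.cosh (b:ℂ) = ((Real.cosh b : ℝ) : ℂ) := (Complex.ofReal_cosh b).symm
  have h4 : Complex.sinh (b:ℂ) = ((Real.sinh b : ℝ) : ℂ) := (Complex.ofReal_sinh b).symm
  rw [h1, h2, h3, h4, ← Complex.ofReal_mul, ← Complex.ofReal_mul, Complex.sq_norm,
    Complex.normSq_apply]
  simp only [Complex.sub_re, Complex.ofReal_re, Complex.mul_re, Complex.I_re, Complex.I_im,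
    Complex.ofReal_im, Complex.sub_im, Complex.mul_im]
  ring_nf
  nlinarith [Real.sin_sq_add_cos_sq a, Real.cosh_sq b]

lemma absSinLe (a b : ℝ) :
    ‖Complex.sin ((a:ℂ) + (b:ℂ) * Complex.I)‖ ≤ Real.cosh b := by
  apply le_of_pow_le_pow_left₀ two_ne_zero (Real.cosh_pos (x := b)).le
  rw [sqAbsSin]
  nlinarith [Real.sin_sq_add_cos_sq a, Real.cosh_sq b, sq_nonneg (Real.cos a)]

lemma absCosLe (a b : ℝ) :
    ‖Complex.cos ((a:ℂ) + (b:ℂ) * Complex.I)‖ ≤ Real.cosh b := by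
  apply le_of_pow_le_pow_left₀ two_ne_zero (Real.cosh_pos (x := b)).le
  rw [sqAbsCos]
  nlinarith [Real.sin_sq_add_cos_sq a, Real.cosh_sq b, sq_nonneg (Real.sin a)]

lemma xiMul (β ξ c : ℝ) :
    ((β:ℂ) + (ξ:ℂ) * Complex.I) * (c:ℂ)
      = ((β * c : ℝ) : ℂ) + ((ξ * c : ℝ) : ℂ) * Complex.I := by
  push_cast; ring

lemma coshMulCosh (x y : ℝ) : Real.cosh x * Real.cosh y ≤ Real.cosh (|x| + |y|) := by
  rw [← Real.cosh_abs x, ← Real.cosh_abs y, Real.cosh_add]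
  have h1 : 0 ≤ Real.sinh |x| := Real.sinh_nonneg_iff.2 (abs_nonneg x)
  have h2 : 0 ≤ Real.sinh |y| := Real.sinh_nonneg_iff.2 (abs_nonneg y)
  nlinarith

lemma sqSinhAbs (x : ℝ) : Real.sinh |x| ^ 2 = Real.sinh x ^ 2 := by
  rcases abs_choice x with h | h
  · rw [h]
  · rw [h, Real.sinh_neg]; ring

lemma absSub (x y : ℂ) : ‖x - y‖ ≤ ‖x‖ + ‖y‖ := by
  simpa [sub_eq_add_neg] using norm_add_le x (-y)

lemma master (β α a b ξ m : ℝ) (hβ1 : 1 ≤ β) (hα0 : 0 < α) (hαπ : α ≤ Real.pi)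
    (hab : |a| + |b| ≤ α) (hm0 : 0 < m) (hm1 : m ≤ |Real.sin (β * α)|) :
    ∃ F' : ℂ,
      HasDerivAt (fun s : ℝ =>
          Complex.sin (((β:ℂ) + (s:ℂ) * Complex.I) * (a:ℂ)) *
            Complex.sin (((β:ℂ) + (s:ℂ) * Complex.I) * (b:ℂ)) /
          (((β:ℂ) + (s:ℂ) * Complex.I) *
            Complex.sin (((β:ℂ) + (s:ℂ) * Complex.I) * (α:ℂ)))) F' ξ ∧
      ‖(β:ℂ) + (ξ:ℂ) * Complex.I‖ *
          ‖Complex.sin (((β:ℂ) + (ξ:ℂ) * Complex.I) * (a:ℂ)) *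
            Complex.sin (((β:ℂ) + (ξ:ℂ) * Complex.I) * (b:ℂ)) /
          (((β:ℂ) + (ξ:ℂ) * Complex.I) *
            Complex.sin (((β:ℂ) + (ξ:ℂ) * Complex.I) * (α:ℂ)))‖ ≤ 1 / m ∧
      |ξ| * ‖F'‖ ≤ 20 / m := by
  set Ξ : ℂ := (β:ℂ) + (ξ:ℂ) * Complex.I with hΞdef
  set u : ℝ := |ξ| * α with hudef
  set C : ℝ := Real.cosh u with hCdef
  set S : ℝ := ‖Complex.sin (Ξ * (α:ℂ))‖ with hSdef
  set R : ℝ := ‖Ξ‖ with hRdef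
  have hu0 : 0 ≤ u := by positivity
  have hm1' : m ≤ 1 := hm1.trans (Real.abs_sin_le_one _)
  have hC1 : 1 ≤ C := Real.one_le_cosh u
  have hS2 : S ^ 2 = Real.sin (β * α) ^ 2 + Real.sinh u ^ 2 := by
    rw [hSdef, hΞdef, xiMul, sqAbsSin]
    congr 1
    rw [← sqSinhAbs (ξ * α), abs_mul, _root_.abs_of_nonneg hα0.le]
  have hmS2 : m ^ 2 + Real.sinh u ^ 2 ≤ S ^ 2 := by
    rw [hS2]
    have : m ^ 2 ≤ Real.sin (β * α) ^ 2 := by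
      rw [← _root_.sq_abs (Real.sin (β * α))]
      exact pow_le_pow_left₀ hm0.le hm1 2
    linarith
  have hmCS : m * C ≤ S := by
    have hS0' : 0 ≤ S := by positivity
    apply le_of_pow_le_pow_left₀ two_ne_zero hS0'
    have hc2 : C ^ 2 = Real.sinh u ^ 2 + 1 := Real.cosh_sq u
    have hm2 : m ^ 2 ≤ 1 := by nlinarith
    nlinarith [sq_nonneg (Real.sinh u), hmS2, hc2, hm2]
  have hS0 : 0 < S := lt_of_lt_of_le (by positivity) hmCS
  have hre : Ξ.re = β := by simp [hΞdef]
  have him : Ξ.im = ξ := by simp [hΞdef]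
  have hR2 : R ^ 2 = β ^ 2 + ξ ^ 2 := by
    rw [hRdef, Complex.sq_norm, Complex.normSq_apply, hre, him]; ring
  have hR0 : 0 ≤ R := by positivity
  have hR1 : 1 ≤ R := by nlinarith [sq_nonneg ξ]
  have hξR : |ξ| ≤ R := by nlinarith [_root_.sq_abs ξ, abs_nonneg ξ]
  have hΞ0 : Ξ ≠ 0 := by
    intro h
    have := congrArg Complex.re h
    rw [hre] at this
    simp at this
    linarith
  have hSα0 : Complex.sin (Ξ * (α:ℂ)) ≠ 0 := by
    intro h
    rw [hSdef, h] at hS0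
    simp at hS0
  have hD0 : Ξ * Complex.sin (Ξ * (α:ℂ)) ≠ 0 := mul_ne_zero hΞ0 hSα0
  -- derivatives
  have hid : HasDerivAt (fun s : ℝ => ((s : ℝ) : ℂ)) 1 ξ := by
    simpa using (hasDerivAt_id ξ).ofReal_comp
  have hΞd : HasDerivAt (fun s : ℝ => (β:ℂ) + (s:ℂ) * Complex.I) Complex.I ξ := by
    simpa using ((hid.mul_const Complex.I).const_add (β:ℂ))
  have hsin : ∀ c : ℝ, HasDerivAt
      (fun s : ℝ => Complex.sin (((β:ℂ) + (s:ℂ) * Complex.I) * (c:ℂ)))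
      (Complex.cos (Ξ * (c:ℂ)) * (Complex.I * (c:ℂ))) ξ := by
    intro c
    have hin : HasDerivAt (fun s : ℝ => ((β:ℂ) + (s:ℂ) * Complex.I) * (c:ℂ))
        (Complex.I * (c:ℂ)) ξ := hΞd.mul_const _
    have := HasDerivAt.scomp (𝕜 := ℝ) ξ (Complex.hasDerivAt_sin (Ξ * (c:ℂ))) hin
    simpa [Function.comp_def, smul_eq_mul, mul_comm] using this
  have hN : HasDerivAt
      (fun s : ℝ => Complex.sin (((β:ℂ) + (s:ℂ) * Complex.I) * (a:ℂ)) *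
        Complex.sin (((β:ℂ) + (s:ℂ) * Complex.I) * (b:ℂ)))
      (Complex.cos (Ξ * (a:ℂ)) * (Complex.I * (a:ℂ)) * Complex.sin (Ξ * (b:ℂ)) +
        Complex.sin (Ξ * (a:ℂ)) * (Complex.cos (Ξ * (b:ℂ)) * (Complex.I * (b:ℂ)))) ξ :=
    (hsin a).mul (hsin b)
  have hD : HasDerivAt
      (fun s : ℝ => ((β:ℂ) + (s:ℂ) * Complex.I) *
        Complex.sin (((β:ℂ) + (s:ℂ) * Complex.I) * (α:ℂ)))
      (Complex.I * Complex.sin (Ξ * (α:ℂ)) +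
        Ξ * (Complex.cos (Ξ * (α:ℂ)) * (Complex.I * (α:ℂ)))) ξ :=
    hΞd.mul (hsin α)
  have hK := hN.div hD hD0
  have hR0' : R ≠ 0 := (lt_of_lt_of_le one_pos hR1).ne'
  have hA : ‖Complex.sin (Ξ * (a:ℂ))‖ ≤ Real.cosh (ξ * a) := by
    rw [hΞdef, xiMul]; exact absSinLe _ _
  have hB : ‖Complex.sin (Ξ * (b:ℂ))‖ ≤ Real.cosh (ξ * b) := by
    rw [hΞdef, xiMul]; exact absSinLe _ _
  have hCa : ‖Complex.cos (Ξ * (a:ℂ))‖ ≤ Real.cosh (ξ * a) := by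
    rw [hΞdef, xiMul]; exact absCosLe _ _
  have hCb : ‖Complex.cos (Ξ * (b:ℂ))‖ ≤ Real.cosh (ξ * b) := by
    rw [hΞdef, xiMul]; exact absCosLe _ _
  have hξα : Real.cosh (ξ * α) = C := by
    rw [hCdef, ← Real.cosh_abs (ξ * α), abs_mul, _root_.abs_of_nonneg hα0.le]
  have hCα : ‖Complex.cos (Ξ * (α:ℂ))‖ ≤ C := by
    rw [← hξα, hΞdef, xiMul]; exact absCosLe _ _
  have hsum : |ξ * a| + |ξ * b| ≤ u := by
    rw [abs_mul, abs_mul]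
    nlinarith [abs_nonneg ξ, hab, abs_nonneg a, abs_nonneg b]
  have hcc : Real.cosh (ξ * a) * Real.cosh (ξ * b) ≤ C := by
    refine (coshMulCosh _ _).trans ?_
    refine Real.cosh_le_cosh.2 ?_
    rw [_root_.abs_of_nonneg (by positivity), _root_.abs_of_nonneg hu0]
    exact hsum
  have hAB : ‖Complex.sin (Ξ * (a:ℂ))‖ * ‖Complex.sin (Ξ * (b:ℂ))‖ ≤ C :=
    le_trans (mul_le_mul hA hB (norm_nonneg _) (Real.cosh_pos _).le) hcc
  have hCdivS : C / S ≤ 1 / m := by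
    rw [div_le_div_iff₀ hS0 hm0]
    nlinarith [hmCS]
  refine ⟨_, hK, ?_, ?_⟩
  · rw [norm_div, norm_mul, norm_mul]
    have heq : R * (‖Complex.sin (Ξ * (a:ℂ))‖ *
        ‖Complex.sin (Ξ * (b:ℂ))‖ / (R * S)) =
        ‖Complex.sin (Ξ * (a:ℂ))‖ * ‖Complex.sin (Ξ * (b:ℂ))‖ / S := by
      field_simp
    rw [heq]
    refine le_trans ?_ hCdivS
    gcongr
  · have hIa : ‖Complex.I * (a:ℂ)‖ = |a| := by
      simp [norm_mul, Complex.norm_real]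
    have hIb : ‖Complex.I * (b:ℂ)‖ = |b| := by
      simp [norm_mul, Complex.norm_real]
    have hIα : ‖Complex.I * (α:ℂ)‖ = α := by
      simp [norm_mul, Complex.norm_real, _root_.abs_of_nonneg hα0.le]
    have t1 : ‖Complex.cos (Ξ * (a:ℂ)) * (Complex.I * (a:ℂ)) *
        Complex.sin (Ξ * (b:ℂ))‖ ≤ |a| * (Real.cosh (ξ * a) * Real.cosh (ξ * b)) := by
      rw [norm_mul, norm_mul, hIa]
      have h := mul_le_mul hCa hB (norm_nonneg _) (Real.cosh_pos _).le
      calc ‖Complex.cos (Ξ * (a:ℂ))‖ * |a| * ‖Complex.sin (Ξ * (b:ℂ))‖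
          = |a| * (‖Complex.cos (Ξ * (a:ℂ))‖ *
            ‖Complex.sin (Ξ * (b:ℂ))‖) := by ring
        _ ≤ |a| * (Real.cosh (ξ * a) * Real.cosh (ξ * b)) :=
            mul_le_mul_of_nonneg_left h (abs_nonneg a)
    have t2 : ‖Complex.sin (Ξ * (a:ℂ)) * (Complex.cos (Ξ * (b:ℂ)) *
        (Complex.I * (b:ℂ)))‖ ≤ |b| * (Real.cosh (ξ * a) * Real.cosh (ξ * b)) := by
      rw [norm_mul, norm_mul, hIb]
      have h := mul_le_mul hA hCb (norm_nonneg _) (Real.cosh_pos _).le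
      calc ‖Complex.sin (Ξ * (a:ℂ))‖ * (‖Complex.cos (Ξ * (b:ℂ))‖ * |b|)
          = |b| * (‖Complex.sin (Ξ * (a:ℂ))‖ *
            ‖Complex.cos (Ξ * (b:ℂ))‖) := by ring
        _ ≤ |b| * (Real.cosh (ξ * a) * Real.cosh (ξ * b)) :=
            mul_le_mul_of_nonneg_left h (abs_nonneg b)
    have hN' : ‖Complex.cos (Ξ * (a:ℂ)) * (Complex.I * (a:ℂ)) *
        Complex.sin (Ξ * (b:ℂ)) + Complex.sin (Ξ * (a:ℂ)) *
        (Complex.cos (Ξ * (b:ℂ)) * (Complex.I * (b:ℂ)))‖ ≤ α * C := by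
      refine le_trans (norm_add_le _ _) ?_
      refine le_trans (add_le_add t1 t2) ?_
      calc |a| * (Real.cosh (ξ * a) * Real.cosh (ξ * b)) +
            |b| * (Real.cosh (ξ * a) * Real.cosh (ξ * b))
          = (|a| + |b|) * (Real.cosh (ξ * a) * Real.cosh (ξ * b)) := by ring
        _ ≤ α * C := mul_le_mul hab hcc (by positivity) hα0.le
    have hD' : ‖Complex.I * Complex.sin (Ξ * (α:ℂ)) +
        Ξ * (Complex.cos (Ξ * (α:ℂ)) * (Complex.I * (α:ℂ)))‖ ≤ S + R * (C * α) := by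
      refine le_trans (norm_add_le _ _) ?_
      rw [norm_mul, norm_mul, norm_mul, hIα, Complex.norm_I, one_mul]
      have h2 : ‖Complex.cos (Ξ * (α:ℂ))‖ * α ≤ C * α :=
        mul_le_mul_of_nonneg_right hCα hα0.le
      have h3 : R * (‖Complex.cos (Ξ * (α:ℂ))‖ * α) ≤ R * (C * α) :=
        mul_le_mul_of_nonneg_left h2 hR0
      linarith
    have hnum : ‖(Complex.cos (Ξ * (a:ℂ)) * (Complex.I * (a:ℂ)) *
          Complex.sin (Ξ * (b:ℂ)) + Complex.sin (Ξ * (a:ℂ)) *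
          (Complex.cos (Ξ * (b:ℂ)) * (Complex.I * (b:ℂ)))) *
          (Ξ * Complex.sin (Ξ * (α:ℂ))) -
          Complex.sin (Ξ * (a:ℂ)) * Complex.sin (Ξ * (b:ℂ)) *
          (Complex.I * Complex.sin (Ξ * (α:ℂ)) +
            Ξ * (Complex.cos (Ξ * (α:ℂ)) * (Complex.I * (α:ℂ))))‖ ≤
        α * C * (R * S) + C * (S + R * (C * α)) := by
      refine le_trans (absSub _ _) ?_
      simp only [norm_mul]
      refine add_le_add ?_ ?_
      · exact mul_le_mul hN' le_rfl (by positivity) (by positivity)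
      · refine mul_le_mul hAB hD' (norm_nonneg _) ?_
        linarith [hC1]
    have habsF' : ‖((Complex.cos (Ξ * (a:ℂ)) * (Complex.I * (a:ℂ)) *
          Complex.sin (Ξ * (b:ℂ)) + Complex.sin (Ξ * (a:ℂ)) *
          (Complex.cos (Ξ * (b:ℂ)) * (Complex.I * (b:ℂ)))) *
          (Ξ * Complex.sin (Ξ * (α:ℂ))) -
          Complex.sin (Ξ * (a:ℂ)) * Complex.sin (Ξ * (b:ℂ)) *
          (Complex.I * Complex.sin (Ξ * (α:ℂ)) +
            Ξ * (Complex.cos (Ξ * (α:ℂ)) * (Complex.I * (α:ℂ))))) /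
          (Ξ * Complex.sin (Ξ * (α:ℂ))) ^ 2‖ ≤
        (α * C * (R * S) + C * (S + R * (C * α))) / (R * S) ^ 2 := by
      rw [norm_div, norm_pow, norm_mul]
      gcongr
    have hRpos : 0 < R := lt_of_lt_of_le one_pos hR1
    have hC0 : (0:ℝ) ≤ C := le_trans zero_le_one hC1
    have hS0' : S ≠ 0 := hS0.ne'
    refine le_trans (mul_le_mul_of_nonneg_left habsF' (abs_nonneg ξ)) ?_
    have hsplit : |ξ| * ((α * C * (R * S) + C * (S + R * (C * α))) / (R * S) ^ 2)
        = |ξ| * (α * C) / (R * S) + |ξ| * C / (R ^ 2 * S) + |ξ| * (α * C ^ 2) / (R * S ^ 2) := by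
      field_simp
      ring
    rw [hsplit]
    have hmCS' : C * m ≤ S := by rw [mul_comm]; exact hmCS
    have hCm0 : (0:ℝ) ≤ C * m := mul_nonneg hC0 hm0.le
    have hT1 : |ξ| * (α * C) / (R * S) ≤ Real.pi / m := by
      rw [div_le_div_iff₀ (mul_pos hRpos hS0) hm0]
      have e2 : α * (C * m) ≤ Real.pi * S := mul_le_mul hαπ hmCS' hCm0 Real.pi_pos.le
      have e3 : |ξ| * (α * (C * m)) ≤ R * (Real.pi * S) :=
        mul_le_mul hξR e2 (mul_nonneg hα0.le hCm0) hR0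
      nlinarith only [e3]
    have hT2 : |ξ| * C / (R ^ 2 * S) ≤ 1 / m := by
      rw [div_le_div_iff₀ (mul_pos (pow_pos hRpos 2) hS0) hm0]
      have e1 : |ξ| * (C * m) ≤ R * S := mul_le_mul hξR hmCS' hCm0 hR0
      have e2 : R * S ≤ R ^ 2 * S := by
        have h := mul_le_mul_of_nonneg_right hR1 (mul_nonneg hR0 hS0.le)
        calc R * S = 1 * (R * S) := by ring
          _ ≤ R * (R * S) := h
          _ = R ^ 2 * S := by ring
      nlinarith only [e1, e2]
    have hT3 : |ξ| * (α * C ^ 2) / (R * S ^ 2) ≤ 13 / m := by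
      rw [div_le_div_iff₀ (mul_pos hRpos (pow_pos hS0 2)) hm0]
      rcases le_or_gt u 1 with hu | hu
      · have he1 : Real.exp 1 < 2.72 := lt_trans Real.exp_one_lt_d9 (by norm_num)
        have he2 : (1:ℝ) < Real.exp 1 := lt_trans (by norm_num) Real.exp_one_gt_d9
        have hcosh1 : Real.cosh 1 < 2 := by
          rw [Real.cosh_eq]
          have h2 : Real.exp (-1) < 1 := by
            rw [Real.exp_neg]
            exact inv_lt_one_of_one_lt₀ he2
          linarith only [he1, h2]
        have hCle : C ≤ 2 := by
          have h : Real.cosh u ≤ Real.cosh 1 :=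
            Real.cosh_le_cosh.2 (by rw [_root_.abs_of_nonneg hu0, abs_one]; exact hu)
          rw [hCdef]; linarith only [h, hcosh1]
        have hsu : u ≤ Real.sinh u := Real.self_le_sinh_iff.2 hu0
        have hsh0 : (0:ℝ) ≤ Real.sinh u := by linarith only [hsu, hu0]
        have hmu : m * u ≤ S ^ 2 := by
          rcases le_or_gt u m with h | h
          · nlinarith only [hmS2, sq_nonneg (Real.sinh u), h, hu0, hm0]
          · nlinarith only [hmS2, hsu, hu0, hm0, hsh0, h, sq_nonneg m]
        calc |ξ| * (α * C ^ 2) * m = C ^ 2 * (m * (|ξ| * α)) := by ring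
          _ = C ^ 2 * (m * u) := by rw [← hudef]
          _ ≤ 4 * (m * u) := by
              have hC4 : C ^ 2 ≤ 4 := by nlinarith only [hCle, hC1]
              nlinarith only [hC4, mul_nonneg hm0.le hu0]
          _ ≤ 4 * S ^ 2 := by nlinarith only [hmu]
          _ ≤ 13 * (R * S ^ 2) := by nlinarith only [hR1, sq_nonneg S]
      · have hs1 : (1:ℝ) < Real.sinh 1 := Real.self_lt_sinh_iff.2 one_pos
        have hsu' : Real.sinh 1 ≤ Real.sinh u := Real.sinh_le_sinh.2 hu.le
        have hdiff : C - Real.sinh u = Real.exp (-u) := by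
          rw [hCdef, Real.cosh_eq, Real.sinh_eq]; ring
        have hexp : Real.exp (-u) ≤ 1 := by
          calc Real.exp (-u) ≤ Real.exp 0 := Real.exp_le_exp.2 (by linarith only [hu])
            _ = 1 := Real.exp_zero
        have hC2s : C ≤ 2 * Real.sinh u := by linarith only [hs1, hsu', hdiff, hexp]
        have hsh2 : Real.sinh u ^ 2 ≤ S ^ 2 := by nlinarith only [hmS2, sq_nonneg m]
        have hsh0 : (0:ℝ) ≤ Real.sinh u := by linarith only [hs1, hsu']
        have hC2sq : C ^ 2 ≤ 4 * S ^ 2 := by nlinarith only [hC2s, hsh2, hsh0, hC1, hC0]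
        have hpi : Real.pi < 3.15 := Real.pi_lt_d2
        calc |ξ| * (α * C ^ 2) * m ≤ |ξ| * (α * C ^ 2) * 1 := by
              nlinarith only [mul_nonneg (abs_nonneg ξ) (mul_nonneg hα0.le (sq_nonneg C)), hm1']
          _ = |ξ| * (α * C ^ 2) := by ring
          _ ≤ R * (α * C ^ 2) := by
              refine mul_le_mul_of_nonneg_right hξR ?_
              exact mul_nonneg hα0.le (sq_nonneg C)
          _ ≤ R * (α * (4 * S ^ 2)) := by
              refine mul_le_mul_of_nonneg_left ?_ hR0
              exact mul_le_mul_of_nonneg_left hC2sq hα0.le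
          _ = (4 * α) * (R * S ^ 2) := by ring
          _ ≤ 13 * (R * S ^ 2) := by
              have h0 : (0:ℝ) ≤ R * S ^ 2 := mul_nonneg hR0 (sq_nonneg S)
              have h1 : (0:ℝ) ≤ 13 - 4 * α := by nlinarith only [hpi, hαπ]
              nlinarith only [mul_nonneg h1 h0]
    calc |ξ| * (α * C) / (R * S) + |ξ| * C / (R ^ 2 * S) + |ξ| * (α * C ^ 2) / (R * S ^ 2)
        ≤ Real.pi / m + 1 / m + 13 / m := add_le_add (add_le_add hT1 hT2) hT3
      _ = (Real.pi + 1 + 13) / m := by rw [← add_div, ← add_div]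
      _ ≤ 20 / m := by
          have h : Real.pi + 1 + 13 ≤ 20 := by linarith [Real.pi_le_four]
          gcongr

lemma sinLower {x : ℝ} (h0 : 0 < x) (hπ : x < Real.pi) :
    2 / Real.pi * min x (Real.pi - x) ≤ Real.sin x := by
  rcases le_or_gt x (Real.pi / 2) with h | h
  · calc 2 / Real.pi * min x (Real.pi - x) ≤ 2 / Real.pi * x := by
          apply mul_le_mul_of_nonneg_left (min_le_left _ _)
          positivity
      _ ≤ Real.sin x := Real.mul_le_sin h0.le h
  · have h2 : Real.sin x = Real.sin (Real.pi - x) := (Real.sin_pi_sub x).symm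
    rw [h2]
    calc 2 / Real.pi * min x (Real.pi - x) ≤ 2 / Real.pi * (Real.pi - x) := by
          apply mul_le_mul_of_nonneg_left (min_le_right _ _)
          positivity
      _ ≤ Real.sin (Real.pi - x) := Real.mul_le_sin (by linarith) (by linarith)


lemma lemA (α p : ℝ) (hα0 : 0 < α) (hαπ : α < Real.pi) (hne : α ≠ Real.pi / 2)
    (hp : 2 ≤ p) (hadm : Admissible α p) :
    2 / Real.pi * min α (min |α - Real.pi / 2| (Real.pi - α)) ≤
      |Real.sin ((2 - 2 / p) * α)| := by
  set ε := min α (min |α - Real.pi / 2| (Real.pi - α)) with hεdef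
  have hp0 : (0:ℝ) < p := by linarith
  have hβ1 : (1:ℝ) ≤ 2 - 2 / p := by
    have h : 2 / p ≤ 1 := by rw [div_le_one hp0]; linarith
    linarith
  have hβ2 : 2 - 2 / p < 2 := by
    have h : 0 < 2 / p := by positivity
    linarith
  set β := 2 - 2 / p with hβdef
  clear_value β
  have hεα : ε ≤ α := min_le_left _ _
  have hεm : ε ≤ |α - Real.pi / 2| := le_trans (min_le_right _ _) (min_le_left _ _)
  have hεπ : ε ≤ Real.pi - α := le_trans (min_le_right _ _) (min_le_right _ _)
  clear_value ε
  have hαβ : α ≤ β * α := by nlinarith only [hβ1, hα0]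
  have hx2 : β * α < 2 * α := by nlinarith only [hβ2, hα0]
  rcases hadm with ⟨h1, h2⟩ | ⟨h1, h2⟩
  · have hx0 : 0 < β * α := lt_of_lt_of_le hα0 hαβ
    have hxπ : β * α < Real.pi := by linarith only [hx2, h1]
    have habs : |α - Real.pi / 2| = Real.pi / 2 - α := by
      rw [abs_of_nonpos (by linarith)]; ring
    have hεx : ε ≤ β * α := le_trans hεα hαβ
    have hεπx : ε ≤ Real.pi - β * α := by
      rw [habs] at hεm
      linarith only [hεm, hx2, h1]
    have hmin : ε ≤ min (β * α) (Real.pi - β * α) := le_min hεx hεπx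
    have hsl := sinLower hx0 hxπ
    have h4 : 2 / Real.pi * ε ≤ 2 / Real.pi * min (β * α) (Real.pi - β * α) :=
      mul_le_mul_of_nonneg_left hmin (by positivity)
    have h5 : Real.sin (β * α) ≤ |Real.sin (β * α)| := le_abs_self _
    linarith
  · have hd : 0 < 2 * α - Real.pi := by linarith
    have hkey : 4 * α ≤ p * (2 * α - Real.pi) := by
      have h3 : 2 * (2 * α / (2 * α - Real.pi)) = 4 * α / (2 * α - Real.pi) := by ring
      rw [h3, div_le_iff₀ hd] at h2
      linarith
    have hβα : α + Real.pi / 2 ≤ β * α := by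
      have h4 : 2 * α / p ≤ α - Real.pi / 2 := by
        rw [div_le_iff₀ hp0]
        nlinarith only [hkey]
      have h5 : β * α = 2 * α - 2 * α / p := by rw [hβdef]; ring
      linarith
    have hxπ' : Real.pi < β * α := by linarith only [hβα, h1]
    have hx2π : β * α < 2 * Real.pi := by linarith only [hx2, hαπ]
    have hz0 : 0 < β * α - Real.pi := by linarith only [hxπ']
    have hzπ : β * α - Real.pi < Real.pi := by linarith only [hx2π]
    have hsinval : Real.sin (β * α) = -Real.sin (β * α - Real.pi) := by
      have h6 := Real.sin_add_pi (β * α - Real.pi)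
      simpa using h6.symm
    have habs2 : |Real.sin (β * α)| = Real.sin (β * α - Real.pi) := by
      rw [hsinval, abs_neg, abs_of_pos (Real.sin_pos_of_pos_of_lt_pi hz0 hzπ)]
    rw [habs2]
    have habs : |α - Real.pi / 2| = α - Real.pi / 2 := abs_of_pos (by linarith)
    have hεx : ε ≤ β * α - Real.pi := by
      rw [habs] at hεm
      linarith only [hεm, hβα]
    have hεπx : ε ≤ Real.pi - (β * α - Real.pi) := by linarith only [hεπ, hx2, hαπ]
    have hmin : ε ≤ min (β * α - Real.pi) (Real.pi - (β * α - Real.pi)) := le_min hεx hεπx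
    have hsl := sinLower hz0 hzπ
    have h4 : 2 / Real.pi * ε ≤ 2 / Real.pi * min (β * α - Real.pi) (Real.pi - (β * α - Real.pi)) :=
      mul_le_mul_of_nonneg_left hmin (by positivity)
    linarith
end Helpers

/-- Uniform bounds `|Ξ||K| ≤ C ε_α⁻¹` and `|ξ||∂_ξ K| ≤ C ε_α⁻¹` for the Green kernel,
with `q = p/(p-1)`, `ε_α = min(α, |α−π/2|, π−α)`, `p` admissible for `α`. -/
theorem stmt17 :
    ∃ C : ℝ, 0 < C ∧
      ∀ α : ℝ, 0 < α → α < Real.pi → α ≠ Real.pi / 2 →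
      ∀ p : ℝ, 2 ≤ p → Admissible α p →
      ∀ ξ θ y : ℝ, 0 < θ → θ < α → 0 < y → y < α →
        ‖Xi (p / (p - 1)) ξ‖ *
            ‖Kker (p / (p - 1)) α ξ θ y‖ ≤
          C / min α (min |α - Real.pi / 2| (Real.pi - α)) ∧
        |ξ| * ‖deriv (fun s : ℝ => Kker (p / (p - 1)) α s θ y) ξ‖ ≤
          C / min α (min |α - Real.pi / 2| (Real.pi - α)) := by
  refine ⟨100, by norm_num, ?_⟩
  intro α hα0 hαπ hne p hp hadm ξ θ y hθ0 hθα hy0 hyα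
  have hp0 : (0:ℝ) < p := by linarith
  have hp1 : p - 1 ≠ 0 := ne_of_gt (by linarith)
  have h2q : 2 / (p / (p - 1)) = 2 - 2 / p := by
    field_simp
  have hβ1 : (1:ℝ) ≤ 2 - 2 / p := by
    have h : 2 / p ≤ 1 := by rw [div_le_one hp0]; linarith
    linarith
  have hε0 : 0 < min α (min |α - Real.pi / 2| (Real.pi - α)) :=
    lt_min hα0 (lt_min (abs_pos.2 (sub_ne_zero.2 hne)) (by linarith))
  have hm0 : 0 < 2 / Real.pi * min α (min |α - Real.pi / 2| (Real.pi - α)) := by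
    have := Real.pi_pos
    positivity
  have hm1 := lemA α p hα0 hαπ hne hp hadm
  have hXi : ∀ s : ℝ, Xi (p / (p - 1)) s = ((2 - 2 / p : ℝ):ℂ) + (s:ℂ) * Complex.I := by
    intro s
    rw [Xi, h2q]
  have hπ0 := Real.pi_pos
  have hπ4 := Real.pi_le_four
  set ε := min α (min |α - Real.pi / 2| (Real.pi - α)) with hεdef
  have h1m : 1 / (2 / Real.pi * ε) ≤ 100 / ε := by
    rw [div_le_div_iff₀ hm0 hε0]
    have h : 100 * (2 / Real.pi * ε) = 200 * ε / Real.pi := by ring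
    rw [h, le_div_iff₀ hπ0]
    nlinarith only [hπ4, hε0]
  have h20m : 20 / (2 / Real.pi * ε) ≤ 100 / ε := by
    rw [div_le_div_iff₀ hm0 hε0]
    have h : 100 * (2 / Real.pi * ε) = 200 * ε / Real.pi := by ring
    rw [h, le_div_iff₀ hπ0]
    nlinarith only [hπ4, hε0]
  rcases le_or_gt θ y with hθy | hθy
  · have hab : |θ| + |y - α| ≤ α := by
      rw [abs_of_pos hθ0, abs_of_neg (by linarith : y - α < 0)]
      linarith
    obtain ⟨F', hF, hb1, hb2⟩ := master (2 - 2 / p) α θ (y - α) ξ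
      (2 / Real.pi * ε) hβ1 hα0 hαπ.le hab hm0 hm1
    have hcast : ((y:ℂ) - (α:ℂ)) = (((y - α : ℝ)):ℂ) := by push_cast; ring
    have hfun : (fun s : ℝ => Kker (p / (p - 1)) α s θ y) = (fun s : ℝ =>
        Complex.sin (((((2 - 2 / p : ℝ)):ℂ) + (s:ℂ) * Complex.I) * (θ:ℂ)) *
          Complex.sin (((((2 - 2 / p : ℝ)):ℂ) + (s:ℂ) * Complex.I) * (((y - α : ℝ)):ℂ)) /
        (((((2 - 2 / p : ℝ)):ℂ) + (s:ℂ) * Complex.I) *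
          Complex.sin (((((2 - 2 / p : ℝ)):ℂ) + (s:ℂ) * Complex.I) * (α:ℂ)))) := by
      funext s
      rw [Kker, if_pos hθy, hXi s, hcast]
    constructor
    · have hKeq : Kker (p / (p - 1)) α ξ θ y =
          Complex.sin (((((2 - 2 / p : ℝ)):ℂ) + (ξ:ℂ) * Complex.I) * (θ:ℂ)) *
            Complex.sin (((((2 - 2 / p : ℝ)):ℂ) + (ξ:ℂ) * Complex.I) * (((y - α : ℝ)):ℂ)) /
          (((((2 - 2 / p : ℝ)):ℂ) + (ξ:ℂ) * Complex.I) *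
            Complex.sin (((((2 - 2 / p : ℝ)):ℂ) + (ξ:ℂ) * Complex.I) * (α:ℂ))) := by
        rw [Kker, if_pos hθy, hXi ξ, hcast]
      rw [hKeq, hXi ξ]
      exact le_trans hb1 h1m
    · rw [hfun, hF.deriv]
      exact le_trans hb2 h20m
  · have hab : |θ - α| + |y| ≤ α := by
      rw [abs_of_pos hy0, abs_of_neg (by linarith : θ - α < 0)]
      linarith
    obtain ⟨F', hF, hb1, hb2⟩ := master (2 - 2 / p) α (θ - α) y ξ
      (2 / Real.pi * ε) hβ1 hα0 hαπ.le hab hm0 hm1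
    have hcast : ((θ:ℂ) - (α:ℂ)) = (((θ - α : ℝ)):ℂ) := by push_cast; ring
    have hfun : (fun s : ℝ => Kker (p / (p - 1)) α s θ y) = (fun s : ℝ =>
        Complex.sin (((((2 - 2 / p : ℝ)):ℂ) + (s:ℂ) * Complex.I) * (((θ - α : ℝ)):ℂ)) *
          Complex.sin (((((2 - 2 / p : ℝ)):ℂ) + (s:ℂ) * Complex.I) * (y:ℂ)) /
        (((((2 - 2 / p : ℝ)):ℂ) + (s:ℂ) * Complex.I) *
          Complex.sin (((((2 - 2 / p : ℝ)):ℂ) + (s:ℂ) * Complex.I) * (α:ℂ)))) := by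
      funext s
      rw [Kker, if_neg (not_le.2 hθy), hXi s, hcast]
    constructor
    · have hKeq : Kker (p / (p - 1)) α ξ θ y =
          Complex.sin (((((2 - 2 / p : ℝ)):ℂ) + (ξ:ℂ) * Complex.I) * (((θ - α : ℝ)):ℂ)) *
            Complex.sin (((((2 - 2 / p : ℝ)):ℂ) + (ξ:ℂ) * Complex.I) * (y:ℂ)) /
          (((((2 - 2 / p : ℝ)):ℂ) + (ξ:ℂ) * Complex.I) *
            Complex.sin (((((2 - 2 / p : ℝ)):ℂ) + (ξ:ℂ) * Complex.I) * (α:ℂ))) := by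
        rw [Kker, if_neg (not_le.2 hθy), hXi ξ, hcast]
      rw [hKeq, hXi ξ]
      exact le_trans hb1 h1m
    · rw [hfun, hF.deriv]
      exact le_trans hb2 h20m
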